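/- Let γ ∈ [1,∞) and let n : ℕ → ℕ satisfy n(N) ≥ N + 1 for all N and n(N)/N → γ as N → ∞. Then there exist a constant C > 0 and an integer N₀ such that for all N ≥ N₀, 1 ≤ σ̃_{n(N)−1,N−1} / σ̃_{n(N)−2,N} ≤ 1 + C/N. -/

import Mathlib

open Real Filter

set_option maxHeartbeats 1000000

/-- σ̃_{m,k} = (√(m+1/2) + √(k+1/2)) · (1/√(m+1/2) + 1/√(k+1/2))^{1/3}. -/
noncomputable def sigt (m k : ℝ) : ℝ :=
  (Real.sqrt (m + 1 / 2) + Real.sqrt (k + 1 / 2)) *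
    (1 / Real.sqrt (m + 1 / 2) + 1 / Real.sqrt (k + 1 / 2)) ^ ((1 : ℝ) / 3)


lemma rpow_third_pow_six (x : ℝ) (hx : 0 ≤ x) : (x ^ ((1:ℝ)/3)) ^ (6:ℕ) = x ^ (2:ℕ) := by
  rw [← Real.rpow_natCast (x ^ ((1:ℝ)/3)) 6, ← Real.rpow_mul hx, ← Real.rpow_natCast x 2]
  norm_num

lemma key (a b : ℝ) (hb : 0 < b) (hab : b ≤ a) :
    1 ≤ sigt (a + 1/2) (b - 1/2) / sigt (a - 1/2) (b + 1/2) ∧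
    sigt (a + 1/2) (b - 1/2) / sigt (a - 1/2) (b + 1/2) ≤ 1 + 1/b := by
  have ha : 0 < a := lt_of_lt_of_le hb hab
  unfold sigt
  rw [show a + 1/2 + 1/2 = a + 1 from by ring, show b - 1/2 + 1/2 = b from by ring,
      show a - 1/2 + 1/2 = a from by ring, show b + 1/2 + 1/2 = b + 1 from by ring]
  set sa1 := Real.sqrt (a+1) with hsa1def
  set sb := Real.sqrt b with hsbdef
  set sa := Real.sqrt a with hsadef
  set sb1 := Real.sqrt (b+1) with hsb1def
  have hsa1 : sa1^2 = a+1 := Real.sq_sqrt (by linarith)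
  have hsb : sb^2 = b := Real.sq_sqrt hb.le
  have hsa : sa^2 = a := Real.sq_sqrt ha.le
  have hsb1 : sb1^2 = b+1 := Real.sq_sqrt (by linarith)
  have hpsa1 : 0 < sa1 := Real.sqrt_pos.2 (by linarith)
  have hpsb : 0 < sb := Real.sqrt_pos.2 hb
  have hpsa : 0 < sa := Real.sqrt_pos.2 ha
  have hpsb1 : 0 < sb1 := Real.sqrt_pos.2 (by linarith)
  set A := (sa1 + sb) * (1/sa1 + 1/sb) ^ ((1:ℝ)/3) with hAdef
  set B := (sa + sb1) * (1/sa + 1/sb1) ^ ((1:ℝ)/3) with hBdef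
  have hA : 0 < A := by positivity
  have hB : 0 < B := by positivity
  set u := sa1 * sb with hudef
  set v := sa * sb1 with hvdef
  have hu : 0 < u := mul_pos hpsa1 hpsb
  have hv : 0 < v := mul_pos hpsa hpsb1
  have hu2 : u^2 = (a+1)*b := by rw [hudef, mul_pow, hsa1, hsb]
  have hv2 : v^2 = a*(b+1) := by rw [hvdef, mul_pow, hsa, hsb1]
  set c := a + b + 1 with hcdef
  have hc : 0 < c := by positivity
  have hA6 : A^6 * u^2 = (c + 2*u)^4 := by
    have h := rpow_third_pow_six (1/sa1 + 1/sb) (by positivity)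
    have hS : (sa1 + sb)^2 = c + 2*u := by rw [hcdef, hudef]; nlinarith [hsa1, hsb]
    calc A^6 * u^2 = (sa1+sb)^6 * ((1/sa1 + 1/sb) ^ ((1:ℝ)/3))^(6:ℕ) * u^2 := by
          rw [hAdef]; ring
      _ = (sa1+sb)^6 * (1/sa1 + 1/sb)^2 * u^2 := by rw [h]
      _ = (sa1+sb)^6 * ((1/sa1 + 1/sb) * (sa1 * sb))^2 := by rw [hudef]; ring
      _ = (sa1+sb)^6 * (sa1+sb)^2 := by
          have : (1/sa1 + 1/sb) * (sa1 * sb) = sa1 + sb := by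
            field_simp
            ring
          rw [this]
      _ = ((sa1+sb)^2)^4 := by ring
      _ = (c + 2*u)^4 := by rw [hS]
  have hB6 : B^6 * v^2 = (c + 2*v)^4 := by
    have h := rpow_third_pow_six (1/sa + 1/sb1) (by positivity)
    have hS : (sa + sb1)^2 = c + 2*v := by rw [hcdef, hvdef]; nlinarith [hsa, hsb1]
    calc B^6 * v^2 = (sa+sb1)^6 * ((1/sa + 1/sb1) ^ ((1:ℝ)/3))^(6:ℕ) * v^2 := by
          rw [hBdef]; ring
      _ = (sa+sb1)^6 * (1/sa + 1/sb1)^2 * v^2 := by rw [h]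
      _ = (sa+sb1)^6 * ((1/sa + 1/sb1) * (sa * sb1))^2 := by rw [hvdef]; ring
      _ = (sa+sb1)^6 * (sa+sb1)^2 := by
          have : (1/sa + 1/sb1) * (sa * sb1) = sa + sb1 := by
            field_simp
            ring
          rw [this]
      _ = ((sa+sb1)^2)^4 := by ring
      _ = (c + 2*v)^4 := by rw [hS]
  have huv : u ≤ v := by nlinarith [hu2, hv2, hu, hv]
  have h4uv : 4*u*v ≤ c^2 := by nlinarith [sq_nonneg (u - v), sq_nonneg (a - b)]
  have h1 : (c + 2*v)^2 * u ≤ (c + 2*u)^2 * v := by nlinarith [mul_nonneg (sub_nonneg.2 huv) (sub_nonneg.2 h4uv)]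
  have h2 : (c + 2*v)^4 * u^2 ≤ (c + 2*u)^4 * v^2 := by
    have hX : 0 ≤ (c + 2*v)^2 * u := by positivity
    have := mul_self_le_mul_self hX h1
    calc (c + 2*v)^4 * u^2 = ((c + 2*v)^2 * u) * ((c + 2*v)^2 * u) := by ring
      _ ≤ ((c + 2*u)^2 * v) * ((c + 2*u)^2 * v) := this
      _ = (c + 2*u)^4 * v^2 := by ring
  -- B^6 ≤ A^6
  have hBA : B^6 ≤ A^6 := by
    have h3 : B^6 * (v^2 * u^2) ≤ A^6 * (v^2 * u^2) := by
      calc B^6 * (v^2 * u^2) = (c + 2*v)^4 * u^2 := by rw [← hB6]; ring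
        _ ≤ (c + 2*u)^4 * v^2 := h2
        _ = A^6 * (v^2 * u^2) := by rw [← hA6]; ring
    exact le_of_mul_le_mul_right h3 (by positivity)
  have h5 : (c + 2*u)^4 ≤ (c + 2*v)^4 := by
    apply pow_le_pow_left₀ (by positivity)
    linarith
  have hAu : A^6 * b ≤ B^6 * (b+1) := by
    have h6 : A^6 * b * (u^2 * v^2) ≤ B^6 * (b+1) * (u^2 * v^2) := by
      calc A^6 * b * (u^2 * v^2) = (c + 2*u)^4 * (a*(b+1)*b) := by rw [← hA6, hv2]; ring
        _ ≤ (c + 2*v)^4 * ((a+1)*(b+1)*b) := by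
            apply mul_le_mul h5 (by nlinarith) (by positivity) (by positivity)
        _ = B^6 * (b+1) * (u^2 * v^2) := by rw [← hB6, hu2]; ring
    exact le_of_mul_le_mul_right h6 (by positivity)
  have hR1 : 1 ≤ A / B := by
    rw [le_div_iff₀ hB, one_mul]
    exact le_of_pow_le_pow_left₀ (by norm_num) hA.le hBA
  refine ⟨hR1, ?_⟩
  have hR6 : (A/B)^6 ≤ 1 + 1/b := by
    rw [div_pow, div_le_iff₀ (by positivity)]
    have : (1 + 1/b) * B^6 = B^6 * (b+1) / b := by field_simp
    rw [this, le_div_iff₀ hb]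
    linarith [hAu]
  calc A/B ≤ (A/B)^6 := le_self_pow₀ hR1 (by norm_num)
    _ ≤ 1 + 1/b := hR6

theorem stmt_8 (γ : ℝ) (hγ : 1 ≤ γ) (n : ℕ → ℕ) (hn : ∀ N, N + 1 ≤ n N)
    (hlim : Tendsto (fun N : ℕ => (n N : ℝ) / (N : ℝ)) atTop (nhds γ)) :
    ∃ C > 0, ∃ N₀ : ℕ, ∀ N ≥ N₀,
      1 ≤ sigt ((n N : ℝ) - 1) ((N : ℝ) - 1) / sigt ((n N : ℝ) - 2) (N : ℝ) ∧
      sigt ((n N : ℝ) - 1) ((N : ℝ) - 1) / sigt ((n N : ℝ) - 2) (N : ℝ) ≤ 1 + C / N := by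
  refine ⟨2, by norm_num, 1, fun N hN => ?_⟩
  have hN1 : (1:ℝ) ≤ N := by exact_mod_cast hN
  have hn' : (N:ℝ) + 1 ≤ (n N : ℝ) := by exact_mod_cast hn N
  have hb : (0:ℝ) < (N:ℝ) - 1/2 := by linarith
  have hab : (N:ℝ) - 1/2 ≤ (n N : ℝ) - 3/2 := by linarith
  obtain ⟨h1, h2⟩ := key ((n N : ℝ) - 3/2) ((N:ℝ) - 1/2) hb hab
  rw [show (n N : ℝ) - 3/2 + 1/2 = (n N : ℝ) - 1 from by ring,
      show (N:ℝ) - 1/2 - 1/2 = (N:ℝ) - 1 from by ring,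
      show (n N : ℝ) - 3/2 - 1/2 = (n N : ℝ) - 2 from by ring,
      show (N:ℝ) - 1/2 + 1/2 = (N:ℝ) from by ring] at h1 h2
  refine ⟨h1, h2.trans ?_⟩
  have : 1 / ((N:ℝ) - 1/2) ≤ 2 / N := by
    rw [div_le_div_iff₀ hb (by linarith)]
    linarith
  linarith
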